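/- (Criterion for a 2-move to the right, case (ii)) Let π̄ be a permutation of {0,1,…,n} such that there exist positions p < q with q+1 ≤ n satisfying π̄_q ≡ π̄_p − 1 (mod n+1) and π̄_{q+1} ≡ π̄_p + 1 (mod n+1) (i.e., π̄ has the pattern [⋯ x ⋯ x̲ x̄ ⋯] where x̲, x̄ denote x−1, x+1 mod n+1). Then there exists a block transposition σ̄ of {0,1,…,n} such that π̄∘σ̄ has at least two more bonds than π̄. -/

import Mathlib

/-- `π` is the block transposition `σ(i,j,k)` on `{1,…,n}` (positions/values written
1-based; the underlying type is `Fin n`, so position `t : Fin n` stands for `t+1`). -/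
def IsBlockTranspositionOf (n i j k : ℕ) (π : Equiv.Perm (Fin n)) : Prop :=
  i < j ∧ j < k ∧ k ≤ n ∧
  ∀ t : Fin n,
    (π t : ℕ) + 1 =
      if t.val + 1 ≤ i ∨ k < t.val + 1 then t.val + 1
      else if t.val + 1 ≤ k - j + i then t.val + 1 + (j - i)
      else t.val + 1 - (k - j)

/-- `π` is a block transposition of `Sym_n`. -/
def IsBlockTransposition (n : ℕ) (π : Equiv.Perm (Fin n)) : Prop :=
  ∃ i j k : ℕ, IsBlockTranspositionOf n i j k π

/-- the block transposition distance `d(π,ν)`: the least `m` such that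
`ν = π ∘ σ₁ ∘ ⋯ ∘ σ_m` with each `σ_i` a block transposition. -/
noncomputable def btDist (n : ℕ) (π ν : Equiv.Perm (Fin n)) : ℕ :=
  sInf {m | ∃ l : List (Equiv.Perm (Fin n)),
    l.length = m ∧ (∀ σ ∈ l, IsBlockTransposition n σ) ∧ ν = π * l.prod}

/-- `[0 π]` : the permutation of `{0,…,n}` fixing `0` and agreeing with `π` on `{1,…,n}`. -/
def zeroExtend {n : ℕ} (π : Equiv.Perm (Fin n)) : Equiv.Perm (Fin (n + 1)) :=
  Equiv.Perm.decomposeFin.symm (0, π)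

/-- the value of the sequence `0 π₁ ⋯ π_n` (positions taken mod `n+1`, `π₀ := 0`). -/
def seqVal (n : ℕ) (π : Equiv.Perm (Fin n)) (x : ℕ) : ℕ :=
  if h : x % (n + 1) = 0 then 0
  else (π ⟨x % (n + 1) - 1, by
    have h2 : x % (n + 1) < n + 1 := Nat.mod_lt _ (Nat.succ_pos n)
    omega⟩ : Fin n).val + 1

/-- `π` and `π'` are torically equivalent: `π'_x ≡ π_{x+r} − π_r (mod n+1)`. -/
def ToricEquiv (n : ℕ) (π π' : Equiv.Perm (Fin n)) : Prop :=
  ∃ r ≤ n, ∀ x : ℕ, 1 ≤ x → x ≤ n →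
    seqVal n π' x ≡ seqVal n π (x + r) + (n + 1) - seqVal n π r [MOD n + 1]

/-- `ϖ` is the image of `π` under the toric map `Ω_r`. -/
def IsToricImage (n r : ℕ) (π ϖ : Equiv.Perm (Fin n)) : Prop :=
  ∀ x : ℕ, 1 ≤ x → x ≤ n →
    seqVal n ϖ x ≡ seqVal n π (x + r) + (n + 1) - seqVal n π r [MOD n + 1]

/-- the value at place `x` of the sequence `0 π₁ ⋯ π_n (n+1)`. -/
def extSeq (n : ℕ) (π : Equiv.Perm (Fin n)) (x : ℕ) : ℕ :=
  if hx : 1 ≤ x ∧ x ≤ n then (π ⟨x - 1, by omega⟩ : Fin n).val + 1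
  else if x = 0 then 0 else n + 1

/-- the number of bonds of `π`, i.e. of adjacent pairs `x, x+1` in the sequence
`0 π₁ ⋯ π_n (n+1)`. -/
def bondCount (n : ℕ) (π : Equiv.Perm (Fin n)) : ℕ :=
  ((Finset.range (n + 1)).filter fun t => extSeq n π (t + 1) = extSeq n π t + 1).card

/-- `σ` is a block transposition `σ̄(i,j,k)`, `−1 ≤ i < j < k ≤ n`, of `{0,1,…,n}`. -/
def IsBlockTransposition0 (n : ℕ) (σ : Equiv.Perm (Fin (n + 1))) : Prop :=
  ∃ i j k : ℤ, -1 ≤ i ∧ i < j ∧ j < k ∧ k ≤ (n : ℤ) ∧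
    ∀ t : Fin (n + 1),
      ((σ t : ℕ) : ℤ) =
        if ((t : ℕ) : ℤ) ≤ i ∨ k < ((t : ℕ) : ℤ) then ((t : ℕ) : ℤ)
        else if ((t : ℕ) : ℤ) ≤ k - j + i then ((t : ℕ) : ℤ) + (j - i)
        else ((t : ℕ) : ℤ) - (k - j)

/-- the number of bonds of a permutation `π̄` of `{0,…,n}`: indices `t`, `0 ≤ t < n`,
with `π̄_{t+1} ≡ π̄_t + 1 (mod n+1)`. -/
def bondCount0 (n : ℕ) (π : Equiv.Perm (Fin (n + 1))) : ℕ :=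
  (Finset.univ.filter fun t : Fin n =>
    (π t.succ : Fin (n + 1)).val = ((π t.castSucc : Fin (n + 1)).val + 1) % (n + 1)).card

/-- 2-move to the right, case (ii): if `π̄` has the pattern
`[⋯ x ⋯ x̲ x̄ ⋯]`, then some block transposition `σ̄` of `{0,…,n}` gives
`π̄∘σ̄` at least two more bonds than `π̄`. -/

private def sfun (p q t : ℕ) : ℕ :=
  if t < p ∨ q < t then t else if t < q then t + 1 else p

private def sinv (p q t : ℕ) : ℕ :=
  if t < p ∨ q < t then t else if t = p then q else t - 1

def shiftPerm (n p q : ℕ) (hpq : p < q) (hq : q ≤ n) : Equiv.Perm (Fin (n+1)) where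
  toFun t := ⟨sfun p q t.val, by have := t.isLt; unfold sfun; split_ifs <;> omega⟩
  invFun t := ⟨sinv p q t.val, by have := t.isLt; unfold sinv; split_ifs <;> omega⟩
  left_inv t := by
    apply Fin.ext
    show sinv p q (sfun p q t.val) = t.val
    unfold sfun sinv; split_ifs <;> omega
  right_inv t := by
    apply Fin.ext
    show sfun p q (sinv p q t.val) = t.val
    unfold sfun sinv; split_ifs <;> omega

lemma shiftPerm_val (n p q : ℕ) (hpq : p < q) (hq : q ≤ n) (t : Fin (n+1)) :
    ((shiftPerm n p q hpq hq) t).val =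
      if t.val < p ∨ q < t.val then t.val else if t.val < q then t.val + 1 else p := rfl

lemma mod_add_one' {m b : ℕ} (hb : b < m + 1) :
    (b + 1) % (m + 1) = if b = m then 0 else b + 1 := by
  split_ifs with h
  · subst h; simp
  · exact Nat.mod_eq_of_lt (by omega)

lemma mod_add_self' {m b : ℕ} (hb : b < m + 1) :
    (b + m) % (m + 1) = if b = 0 then m else b - 1 := by
  split_ifs with h
  · subst h; simp [Nat.mod_eq_of_lt]
  · have h2 : b + m = (b - 1) + 1 * (m + 1) := by omega
    rw [h2, Nat.add_mul_mod_self_right]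
    exact Nat.mod_eq_of_lt (by omega)
set_option maxHeartbeats 1000000 in
theorem two_move_right_ii (n p q : ℕ) (hpq : p < q) (hq : q + 1 ≤ n)
    (π : Equiv.Perm (Fin (n + 1)))
    (h1 : (π ⟨q, by omega⟩).val = ((π ⟨p, by omega⟩).val + n) % (n + 1))
    (h2 : (π ⟨q + 1, by omega⟩).val = ((π ⟨p, by omega⟩).val + 1) % (n + 1)) :
    ∃ σ : Equiv.Perm (Fin (n + 1)),
      IsBlockTransposition0 n σ ∧ bondCount0 n π + 2 ≤ bondCount0 n (π * σ) := by
  have hq' : q ≤ n := by omega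
  have hpn : p < n + 1 := by omega
  have hqn : q < n + 1 := by omega
  have hq1n : q + 1 < n + 1 := by omega
  obtain ⟨σ, hσdef⟩ : ∃ σ, σ = shiftPerm n p q hpq hq' := ⟨_, rfl⟩
  have hσ : ∀ u : Fin (n+1), (σ u).val =
      if u.val < p ∨ q < u.val then u.val else if u.val < q then u.val + 1 else p := by
    rw [hσdef]; exact shiftPerm_val n p q hpq hq'
  refine ⟨σ, ?_, ?_⟩
  · refine ⟨(p:ℤ) - 1, p, q, by omega, by omega, by exact_mod_cast hpq, by exact_mod_cast hq', ?_⟩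
    intro t
    have hv := hσ t
    have h3 : ((σ t : ℕ) : ℤ) = ((if t.val < p ∨ q < t.val then t.val
        else if t.val < q then t.val + 1 else p : ℕ) : ℤ) := by rw [hv]
    rw [h3]
    split_ifs <;> push_cast <;> omega
  · -- bond counting
    have h1' : (π ⟨q, hqn⟩).val = ((π ⟨p, hpn⟩).val + n) % (n + 1) := h1
    have h2' : (π ⟨q + 1, hq1n⟩).val = ((π ⟨p, hpn⟩).val + 1) % (n + 1) := h2
    clear h1 h2
    obtain ⟨x, hxdef⟩ : ∃ x, (π (⟨p, hpn⟩ : Fin (n+1))).val = x := ⟨_, rfl⟩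
    have hx : x < n + 1 := hxdef ▸ (π (⟨p, hpn⟩ : Fin (n+1))).isLt
    rw [hxdef] at h1' h2'
    obtain ⟨S, hSdef⟩ : ∃ S, S = Finset.univ.filter (fun t : Fin n =>
      (π t.succ).val = ((π t.castSucc).val + 1) % (n+1)) := ⟨_, rfl⟩
    obtain ⟨T, hTdef⟩ : ∃ T, T = Finset.univ.filter (fun t : Fin n =>
      ((π * σ) t.succ).val = (((π * σ) t.castSucc).val + 1) % (n+1)) := ⟨_, rfl⟩
    have hmemS : ∀ t : Fin n, t ∈ S ↔
        (π t.succ).val = ((π t.castSucc).val + 1) % (n+1) := by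
      intro t; rw [hSdef]; simp
    have hmemT : ∀ t : Fin n, t ∈ T ↔
        (π (σ t.succ)).val = ((π (σ t.castSucc)).val + 1) % (n+1) := by
      intro t; rw [hTdef, Finset.mem_filter]; simp [Equiv.Perm.mul_apply]
    -- exclusions for members of S
    have hexcl : ∀ t : Fin n, t ∈ S → t.val + 1 ≠ p ∧ t.val ≠ p ∧ t.val ≠ q := by
      intro t ht
      rw [hmemS] at ht
      refine ⟨?_, ?_, ?_⟩
      · intro h
        have hsucc : t.succ = (⟨p, hpn⟩ : Fin (n+1)) := by
          apply Fin.ext; show t.val + 1 = p; omega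
        rw [hsucc, hxdef] at ht
        have hy : (π t.castSucc).val < n + 1 := (π t.castSucc).isLt
        have heq : (π t.castSucc).val = (π (⟨q, hqn⟩ : Fin (n+1))).val := by
          rw [h1', mod_add_self' hx]
          rw [mod_add_one' hy] at ht
          split_ifs at ht ⊢ <;> omega
        have h5 := π.injective (Fin.ext heq : π t.castSucc = π ⟨q, hqn⟩)
        have h6 : t.val = q := by simpa [Fin.ext_iff] using h5
        omega
      · intro h
        have hcs : t.castSucc = (⟨p, hpn⟩ : Fin (n+1)) := by
          apply Fin.ext; show t.val = p; omega
        rw [hcs, hxdef, ← h2'] at ht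
        have h5 := π.injective (Fin.ext ht : π t.succ = π ⟨q+1, hq1n⟩)
        have h6 : t.val + 1 = q + 1 := by simpa [Fin.ext_iff] using h5
        omega
      · intro h
        have hcs : t.castSucc = (⟨q, hqn⟩ : Fin (n+1)) := by
          apply Fin.ext; show t.val = q; omega
        have hsucc : t.succ = (⟨q+1, hq1n⟩ : Fin (n+1)) := by
          apply Fin.ext; show t.val + 1 = q + 1; omega
        rw [hcs, hsucc, h2', h1'] at ht
        rw [mod_add_one' hx, mod_add_self' hx] at ht
        by_cases hx0 : x = 0
        · rw [if_pos hx0] at ht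
          rw [mod_add_one' (show n < n + 1 by omega)] at ht
          split_ifs at ht <;> omega
        · have hlt : x - 1 < n + 1 := by omega
          rw [if_neg hx0, mod_add_one' hlt] at ht
          split_ifs at ht <;> omega
    -- the injection
    obtain ⟨f, hfval⟩ : ∃ f : Fin n → Fin n, ∀ t : Fin n, (f t).val =
        if p + 1 ≤ t.val ∧ t.val ≤ q - 1 then t.val - 1 else t.val := by
      refine ⟨fun t => if h : p + 1 ≤ t.val ∧ t.val ≤ q - 1 then ⟨t.val - 1, by omega⟩ else t, ?_⟩
      intro t
      dsimp only
      by_cases h : p + 1 ≤ t.val ∧ t.val ≤ q - 1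
      · rw [dif_pos h, if_pos h]
      · rw [dif_neg h, if_neg h]
    obtain ⟨Qm1, hQm1⟩ : ∃ t : Fin n, t.val = q - 1 := ⟨⟨q - 1, by omega⟩, rfl⟩
    obtain ⟨Q, hQ⟩ : ∃ t : Fin n, t.val = q := ⟨⟨q, by omega⟩, rfl⟩
    -- f maps S into T
    have hmaps : ∀ t ∈ S, f t ∈ T := by
      intro t ht
      obtain ⟨he1, he2, he3⟩ := hexcl t ht
      rw [hmemS] at ht
      rw [hmemT]
      by_cases hcase : p + 1 ≤ t.val ∧ t.val ≤ q - 1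
      · have hfv : (f t).val = t.val - 1 := by rw [hfval, if_pos hcase]
        have e1 : σ (f t).succ = t.succ := by
          apply Fin.ext
          have hv := hσ (f t).succ
          have hsv : ((f t).succ).val = t.val - 1 + 1 := by
            show (f t).val + 1 = t.val - 1 + 1; omega
          rw [hsv] at hv
          rw [hv]
          show _ = t.val + 1
          split_ifs <;> omega
        have e2 : σ (f t).castSucc = t.castSucc := by
          apply Fin.ext
          have hv := hσ (f t).castSucc
          have hsv : ((f t).castSucc).val = t.val - 1 := by
            show (f t).val = t.val - 1; omega
          rw [hsv] at hv
          rw [hv]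
          show _ = t.val
          split_ifs <;> omega
        rw [e1, e2]
        exact ht
      · have hfv : f t = t := by
          apply Fin.ext; rw [hfval, if_neg hcase]
        rw [hfv]
        have hrange : t.val + 1 < p ∨ q < t.val := by omega
        have e1 : σ t.succ = t.succ := by
          apply Fin.ext
          rw [hσ, if_pos (show (t.succ).val < p ∨ q < (t.succ).val by
            show t.val + 1 < p ∨ q < t.val + 1; omega)]
        have e2 : σ t.castSucc = t.castSucc := by
          apply Fin.ext
          rw [hσ, if_pos (show (t.castSucc).val < p ∨ q < (t.castSucc).val by
            show t.val < p ∨ q < t.val; omega)]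
        rw [e1, e2]
        exact ht
    -- the two new bonds
    have hQm1T : Qm1 ∈ T := by
      rw [hmemT]
      have e1 : σ Qm1.succ = (⟨p, hpn⟩ : Fin (n+1)) := by
        apply Fin.ext
        have hv := hσ Qm1.succ
        have hsv : (Qm1.succ).val = q := by show Qm1.val + 1 = q; omega
        rw [hsv] at hv
        rw [hv]
        show _ = p
        split_ifs <;> omega
      have e2 : σ Qm1.castSucc = (⟨q, hqn⟩ : Fin (n+1)) := by
        apply Fin.ext
        have hv := hσ Qm1.castSucc
        have hsv : (Qm1.castSucc).val = q - 1 := by show Qm1.val = q - 1; omega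
        rw [hsv] at hv
        rw [hv]
        show _ = q
        split_ifs <;> omega
      rw [e1, e2, hxdef, h1']
      rw [mod_add_self' hx]
      by_cases hx0 : x = 0
      · rw [if_pos hx0, mod_add_one' (show n < n + 1 by omega)]
        split_ifs <;> omega
      · rw [if_neg hx0, mod_add_one' (show x - 1 < n + 1 by omega)]
        split_ifs <;> omega
    have hQT : Q ∈ T := by
      rw [hmemT]
      have e1 : σ Q.succ = (⟨q + 1, hq1n⟩ : Fin (n+1)) := by
        apply Fin.ext
        have hv := hσ Q.succ
        have hsv : (Q.succ).val = q + 1 := by show Q.val + 1 = q + 1; omega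
        rw [hsv] at hv
        rw [hv]
        show _ = q + 1
        split_ifs <;> omega
      have e2 : σ Q.castSucc = (⟨p, hpn⟩ : Fin (n+1)) := by
        apply Fin.ext
        have hv := hσ Q.castSucc
        have hsv : (Q.castSucc).val = q := by show Q.val = q; omega
        rw [hsv] at hv
        rw [hv]
        show _ = p
        split_ifs <;> omega
      rw [e1, e2, hxdef]
      exact h2'
    -- injectivity and disjointness
    have hinj : Set.InjOn f S := by
      intro a ha b hb hab
      obtain ⟨a1, a2, a3⟩ := hexcl a ha
      obtain ⟨b1, b2, b3⟩ := hexcl b hb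
      have h := congrArg Fin.val hab
      rw [hfval, hfval] at h
      apply Fin.ext
      split_ifs at h <;> omega
    have hnotin : ∀ t ∈ S, f t ≠ Qm1 ∧ f t ≠ Q := by
      intro t ht
      obtain ⟨e1, e2, e3⟩ := hexcl t ht
      constructor <;> intro h <;>
        (have h' := congrArg Fin.val h; rw [hfval] at h'; split_ifs at h' <;> omega)
    have hQm1Q : Qm1 ≠ Q := by
      intro h
      have h' := congrArg Fin.val h
      omega
    have hsubset : S.image f ∪ {Qm1, Q} ⊆ T := by
      intro a ha
      rcases Finset.mem_union.mp ha with h | h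
      · obtain ⟨t, ht, rfl⟩ := Finset.mem_image.mp h
        exact hmaps t ht
      · rcases Finset.mem_insert.mp h with rfl | h
        · exact hQm1T
        · rw [Finset.mem_singleton.mp h]
          exact hQT
    have hdisj : Disjoint (S.image f) ({Qm1, Q} : Finset (Fin n)) := by
      rw [Finset.disjoint_left]
      intro a ha hb
      obtain ⟨t, ht, rfl⟩ := Finset.mem_image.mp ha
      obtain ⟨hn1, hn2⟩ := hnotin t ht
      rcases Finset.mem_insert.mp hb with h | h
      · exact hn1 h
      · exact hn2 (Finset.mem_singleton.mp h)
    have c1 : bondCount0 n π = S.card := by rw [hSdef]; rfl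
    have c2 : bondCount0 n (π * σ) = T.card := by rw [hTdef]; rfl
    calc bondCount0 n π + 2 = S.card + 2 := by rw [c1]
      _ = (S.image f).card + ({Qm1, Q} : Finset (Fin n)).card := by
          rw [Finset.card_image_of_injOn hinj, Finset.card_pair hQm1Q]
      _ = (S.image f ∪ {Qm1, Q}).card := (Finset.card_union_of_disjoint hdisj).symm
      _ ≤ T.card := Finset.card_le_card hsubset
      _ = bondCount0 n (π * σ) := c2.symm
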